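/- Let I_i, I_j, I_k ∈ (−1, 1] with γ_{ijk} = I_i + I_jI_k ≥ 0 cyclically, and let a_η ≥ 1, x_η > 0 be arbitrary reals (with a_η² − x_η² = 1). Then the determinant of the matrix M = [[0, a_k x_j + I_i a_j x_k, a_j x_k + I_i a_k x_j], [a_k x_i + I_j a_i x_k, 0, a_i x_k + I_j a_k x_i], [a_j x_i + I_k a_i x_j, a_i x_j + I_k a_j x_i, 0]] is strictly positive. -/
import Mathlib


open Real Matrix

theorem det_M_pos
    (Ii Ij Ik ai aj ak xi xj xk : ℝ)
    (hIi : Ii ∈ Set.Ioc (-1 : ℝ) 1) (hIj : Ij ∈ Set.Ioc (-1 : ℝ) 1) (hIk : Ik ∈ Set.Ioc (-1 : ℝ) 1)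
    (hγi : 0 ≤ Ii + Ij * Ik) (hγj : 0 ≤ Ij + Ik * Ii) (hγk : 0 ≤ Ik + Ii * Ij)
    (hai : 1 ≤ ai) (haj : 1 ≤ aj) (hak : 1 ≤ ak)
    (hxi : 0 < xi) (hxj : 0 < xj) (hxk : 0 < xk)
    (hi : ai ^ 2 - xi ^ 2 = 1) (hj : aj ^ 2 - xj ^ 2 = 1) (hk : ak ^ 2 - xk ^ 2 = 1) :
    0 < Matrix.det !![(0 : ℝ), ak * xj + Ii * aj * xk, aj * xk + Ii * ak * xj;
                      ak * xi + Ij * ai * xk, 0, ai * xk + Ij * ak * xi;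
                      aj * xi + Ik * ai * xj, ai * xj + Ik * aj * xi, 0] := by
  obtain ⟨hIi1, hIi2⟩ := hIi
  obtain ⟨hIj1, hIj2⟩ := hIj
  obtain ⟨hIk1, hIk2⟩ := hIk
  have hai0 : (0:ℝ) < ai := by linarith
  have haj0 : (0:ℝ) < aj := by linarith
  have hak0 : (0:ℝ) < ak := by linarith
  have key : Matrix.det !![(0 : ℝ), ak * xj + Ii * aj * xk, aj * xk + Ii * ak * xj;
                      ak * xi + Ij * ai * xk, 0, ai * xk + Ij * ak * xi;
                      aj * xi + Ik * ai * xj, ai * xj + Ik * aj * xi, 0]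
      = (Ii + Ij * Ik) * (ai * xi * (ak^2 * xj^2 + aj^2 * xk^2))
      + (Ij + Ik * Ii) * (aj * xj * (ai^2 * xk^2 + ak^2 * xi^2))
      + (Ik + Ii * Ij) * (ak * xk * (aj^2 * xi^2 + ai^2 * xj^2))
      + 2 * (1 + Ii * Ij * Ik) * (ai * aj * ak * xi * xj * xk) := by
    rw [Matrix.det_fin_three]
    simp [Matrix.cons_val_zero, Matrix.cons_val_one]
    ring
  have h1 : 0 ≤ (Ii + Ij * Ik) * (ai * xi * (ak^2 * xj^2 + aj^2 * xk^2)) :=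
    mul_nonneg hγi (by positivity)
  have h2 : 0 ≤ (Ij + Ik * Ii) * (aj * xj * (ai^2 * xk^2 + ak^2 * xi^2)) :=
    mul_nonneg hγj (by positivity)
  have h3 : 0 ≤ (Ik + Ii * Ij) * (ak * xk * (aj^2 * xi^2 + ai^2 * xj^2)) :=
    mul_nonneg hγk (by positivity)
  have hprod : 0 < 1 + Ii * Ij * Ik := by
    nlinarith [mul_pos (by linarith : (0:ℝ) < 1 + Ii) (by linarith : (0:ℝ) < 1 + Ij),
      mul_nonneg (by linarith : (0:ℝ) ≤ 1 - Ii) (by linarith : (0:ℝ) ≤ 1 - Ij),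
      mul_nonneg (by linarith : (0:ℝ) ≤ 1 - Ik) (by linarith : (0:ℝ) ≤ 1 - Ii),
      mul_nonneg (by linarith : (0:ℝ) ≤ 1 - Ij) (by linarith : (0:ℝ) ≤ 1 - Ik)]
  have h4 : 0 < 2 * (1 + Ii * Ij * Ik) * (ai * aj * ak * xi * xj * xk) := by positivity
  rw [key]; linarith
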